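/- For every p with 0 < p ≤ 1/2, the Rényi entropy of the Bernoulli distribution satisfies H_{1/2}(Ber(p)) = 2·log₂(√p + √(1−p)) ≥ (1/2)·log₂(e)·√p. -/

import Mathlib

/-- **Lower bound on `H_{1/2}` of a Bernoulli distribution.** For `0 < p ≤ 1/2`, the
Rényi entropy `H_{1/2}(Ber(p)) = (1/(1−1/2))·log₂(p^{1/2} + (1−p)^{1/2})` equals
`2·log₂(√p + √(1−p))` and is at least `(1/2)·log₂(e)·√p`. -/
theorem bernoulli_renyi_half (p : ℝ) (hp : 0 < p) (hp' : p ≤ 1 / 2) :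
    (1 / (1 - (1 : ℝ) / 2)) * Real.logb 2 (p ^ ((1 : ℝ) / 2) + (1 - p) ^ ((1 : ℝ) / 2)) =
      2 * Real.logb 2 (Real.sqrt p + Real.sqrt (1 - p)) ∧
    (1 / 2) * Real.logb 2 (Real.exp 1) * Real.sqrt p ≤
      2 * Real.logb 2 (Real.sqrt p + Real.sqrt (1 - p)) := by
  have hp1 : (0:ℝ) < 1 - p := by linarith
  constructor
  · rw [← Real.sqrt_eq_rpow, ← Real.sqrt_eq_rpow]
    norm_num
  · set a := Real.sqrt p with ha_def
    set b := Real.sqrt (1 - p) with hb_def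
    have ha : 0 < a := Real.sqrt_pos.mpr hp
    have hb : 0 < b := Real.sqrt_pos.mpr hp1
    have ha2 : a ^ 2 = p := Real.sq_sqrt hp.le
    have hb2 : b ^ 2 = 1 - p := Real.sq_sqrt hp1.le
    have ha1 : a ≤ 1 := by nlinarith
    have hbhalf : (1:ℝ) ≤ 2 * b := by nlinarith [hb2, hb]
    -- u := 2*a*b, key facts
    have hu0 : 0 ≤ 2 * a * b := by positivity
    have hu1 : 2 * a * b ≤ 1 := by nlinarith [sq_nonneg (a - b)]
    have hua : a ≤ 2 * a * b := by nlinarith [hbhalf, ha]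
    have hsq : (a + b) ^ 2 = 1 + 2 * a * b := by nlinarith
    have hspos : 0 < a + b := by linarith
    have hxpos : (0:ℝ) < 1 + 2 * a * b := by linarith
    -- log lower bound: log x ≥ 1 - 1/x
    have hlog : 1 - (1 + 2 * a * b)⁻¹ ≤ Real.log (1 + 2 * a * b) := by
      have h := Real.log_le_sub_one_of_pos (inv_pos.mpr hxpos)
      rw [Real.log_inv] at h
      linarith
    have hfrac : a / 2 ≤ 1 - (1 + 2 * a * b)⁻¹ := by
      have h1 : 1 - (1 + 2 * a * b)⁻¹ = (2 * a * b) / (1 + 2 * a * b) := by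
        field_simp
        ring
      rw [h1, div_le_div_iff₀ (by norm_num) hxpos]
      nlinarith
    have key : a / 2 ≤ 2 * Real.log (a + b) := by
      have h2 : 2 * Real.log (a + b) = Real.log ((a + b) ^ 2) := by
        rw [Real.log_pow]; push_cast; ring
      rw [h2, hsq]
      linarith
    have hl2 : 0 < Real.log 2 := Real.log_pos one_lt_two
    rw [Real.logb, Real.logb, Real.log_exp]
    calc (1:ℝ) / 2 * (1 / Real.log 2) * a = (a / 2) / Real.log 2 := by ring
      _ ≤ (2 * Real.log (a + b)) / Real.log 2 := by
          gcongr
      _ = 2 * (Real.log (a + b) / Real.log 2) := by ring
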